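/- Let ∥ be a Clifford-like parallelism. For every g ∈ H with g ≠ 0, the left translation λ_g : x ↦ g·x preserves ∥. -/
import Mathlib


variable (F H : Type*) [Field F] [DivisionRing H] [Algebra F H]

/-- A *line* of the projective space `ℙ(H_F)`: a 2-dimensional `F`-subspace of `H`. -/
abbrev Line := {M : Submodule F H // Module.finrank F M = 2}

/-- `M ∥ℓ N` : there is `g ≠ 0` with `N = g·M`. -/
def LeftPar (M N : Submodule F H) : Prop :=
  ∃ g : H, g ≠ 0 ∧ (N : Set H) = (fun m => g * m) '' (M : Set H)

/-- `M ∥r N` : there is `g ≠ 0` with `N = M·g`. -/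
def RightPar (M N : Submodule F H) : Prop :=
  ∃ g : H, g ≠ 0 ∧ (N : Set H) = (fun m => m * g) '' (M : Set H)

/-- The left parallel class `Sℓ(M) = {N | N ∥ℓ M}`. -/
def leftClass (M : Line F H) : Set (Line F H) := {N | LeftPar F H N.1 M.1}

/-- The right parallel class `Sr(M) = {N | N ∥r M}`. -/
def rightClass (M : Line F H) : Set (Line F H) := {N | RightPar F H N.1 M.1}

/-- The `∥`-class `S(M) = {N | N ∥ M}`. -/
def parClass (par : Line F H → Line F H → Prop) (M : Line F H) : Set (Line F H) :=
  {N | par N M}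

/-- A parallelism: an equivalence relation on lines such that for every `x ≠ 0`
and every line `M` there is exactly one line `N` with `x ∈ N` and `N ∥ M`. -/
def IsParallelism (par : Line F H → Line F H → Prop) : Prop :=
  Equivalence par ∧
    ∀ x : H, x ≠ 0 → ∀ M : Line F H, ∃! N : Line F H, x ∈ N.1 ∧ par N M

/-- A Clifford-like parallelism: every `∥`-class is a left or a right parallel class. -/
def IsCliffordLike (par : Line F H → Line F H → Prop) : Prop :=
  IsParallelism F H par ∧
    ∀ M : Line F H,
      parClass F H par M = leftClass F H M ∨ parClass F H par M = rightClass F H M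

/-- The star `𝒜` of lines through `F·1`, i.e. the lines containing `1`. -/
def starLines : Set (Line F H) := {L | (1 : H) ∈ L.1}

/-- The set `ℱ` of lines of `𝒜` whose `∥`-class is a left parallel class. -/
def calF (par : Line F H → Line F H → Prop) : Set (Line F H) :=
  {L | (1 : H) ∈ L.1 ∧ parClass F H par L = leftClass F H L}

/-- A semilinear bijection of `H` (over some field automorphism of `F`). -/
def IsSemilinear (β : H → H) : Prop :=
  Function.Bijective β ∧ (∀ x y : H, β (x + y) = β x + β y) ∧
    ∃ σ : F ≃+* F, ∀ (a : F) (x : H), β (a • x) = σ a • β x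

/-- `β` preserves the parallelism `par`: for all lines `M, N`,
`M ∥ N ↔ β(M) ∥ β(N)`, where `β(M)` denotes the line whose carrier is `β '' M`. -/
def Preserves (β : H → H) (par : Line F H → Line F H → Prop) : Prop :=
  ∀ M N M' N' : Line F H,
    (M'.1 : Set H) = β '' (M.1 : Set H) →
    (N'.1 : Set H) = β '' (N.1 : Set H) →
    (par M N ↔ par M' N')

/-- The image `β(𝒢)` of a set of lines under `β`. -/
def imageLines (β : H → H) (G : Set (Line F H)) : Set (Line F H) :=
  {L' | ∃ L ∈ G, (L'.1 : Set H) = β '' (L.1 : Set H)}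

/-- The centre of `H` is exactly `F·1`. -/
def CenterEqF : Prop :=
  ∀ z : H, (∀ x : H, z * x = x * z) ↔ ∃ a : F, z = algebraMap F H a

/-- Ring automorphism of `H`, as a plain function. -/
def IsRingAutFn (α : H → H) : Prop :=
  Function.Bijective α ∧ (∀ x y : H, α (x + y) = α x + α y) ∧ α 1 = 1 ∧
    ∀ x y : H, α (x * y) = α x * α y

/-- Ring antiautomorphism of `H`, as a plain function. -/
def IsRingAntiAutFn (α : H → H) : Prop :=
  Function.Bijective α ∧ (∀ x y : H, α (x + y) = α x + α y) ∧ α 1 = 1 ∧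
    ∀ x y : H, α (x * y) = α y * α x

lemma img_comp (a b : H) (s : Set H) :
    (fun m => a * m) '' ((fun m => b * m) '' s) = (fun m => (a * b) * m) '' s := by
  rw [Set.image_image]; simp [mul_assoc]

lemma flip_left {a : H} (ha : a ≠ 0) {s t : Set H}
    (h : t = (fun m => a * m) '' s) : s = (fun m => a⁻¹ * m) '' t := by
  rw [h, img_comp, inv_mul_cancel₀ ha]; simp

lemma comm_img (a b : H) (s : Set H) :
    (fun m => a * m) '' ((fun m => m * b) '' s)
      = (fun m => m * b) '' ((fun m => a * m) '' s) := by
  rw [Set.image_image, Set.image_image]; simp [mul_assoc]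

lemma fwd (par : Line F H → Line F H → Prop) (hpar : IsCliffordLike F H par)
    (g : H) (hg : g ≠ 0) (M N M' N' : Line F H)
    (hM' : (M'.1 : Set H) = (fun x => g * x) '' (M.1 : Set H))
    (hN' : (N'.1 : Set H) = (fun x => g * x) '' (N.1 : Set H))
    (h : par M N) : par M' N' := by
  obtain ⟨⟨heq, _⟩, hc⟩ := hpar
  rcases hc M with hcM | hcM
  · -- the class of M is a left class
    have hNM : N ∈ parClass F H par M := heq.symm h
    rw [hcM] at hNM
    obtain ⟨k, hk0, hk⟩ := hNM
    have hMM' : par M' M := by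
      have : M' ∈ parClass F H par M := by
        rw [hcM]
        exact ⟨g⁻¹, inv_ne_zero hg, flip_left H hg hM'⟩
      exact this
    have hN'M : par N' M := by
      have hNrev : (N.1 : Set H) = (fun m => k⁻¹ * m) '' (M.1 : Set H) :=
        flip_left H hk0 hk
      have hgk : g * k⁻¹ ≠ 0 := mul_ne_zero hg (inv_ne_zero hk0)
      have hN'M1 : (N'.1 : Set H) = (fun m => (g * k⁻¹) * m) '' (M.1 : Set H) := by
        rw [hN', hNrev, img_comp]
      have : N' ∈ parClass F H par M := by
        rw [hcM]
        exact ⟨(g * k⁻¹)⁻¹, inv_ne_zero hgk, flip_left H hgk hN'M1⟩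
      exact this
    exact heq.trans hMM' (heq.symm hN'M)
  · -- the class of M is a right class
    have hNM : N ∈ parClass F H par M := heq.symm h
    rw [hcM] at hNM
    obtain ⟨k, hk0, hk⟩ := hNM
    have hR : (M'.1 : Set H) = (fun m => m * k) '' (N'.1 : Set H) := by
      rw [hM', hk, hN', comm_img]
    rcases hc M' with hcM' | hcM'
    · -- the class of M' is a left class: then the class of M is also left
      have hMM' : par M M' := by
        have : M ∈ parClass F H par M' := by rw [hcM']; exact ⟨g, hg, hM'⟩
        exact this
      have hNM' : N ∈ parClass F H par M' := heq.trans (heq.symm h) hMM'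
      rw [hcM'] at hNM'
      obtain ⟨c, hc0, hceq⟩ := hNM'
      have hNrev : (N.1 : Set H) = (fun m => c⁻¹ * m) '' (M'.1 : Set H) :=
        flip_left H hc0 hceq
      have hgc : g * c⁻¹ ≠ 0 := mul_ne_zero hg (inv_ne_zero hc0)
      have hN'M1 : (N'.1 : Set H) = (fun m => (g * c⁻¹) * m) '' (M'.1 : Set H) := by
        rw [hN', hNrev, img_comp]
      have : N' ∈ parClass F H par M' := by
        rw [hcM']
        exact ⟨(g * c⁻¹)⁻¹, inv_ne_zero hgc, flip_left H hgc hN'M1⟩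
      exact heq.symm this
    · -- the class of M' is a right class
      have : N' ∈ parClass F H par M' := by rw [hcM']; exact ⟨k, hk0, hR⟩
      exact heq.symm this

/-- Every left translation `λ_g : x ↦ g·x`, `g ≠ 0`, preserves every Clifford-like
parallelism. -/
theorem leftTranslation_preserves
    (hcenter : CenterEqF F H) (hdim : Module.finrank F H = 4)
    (par : Line F H → Line F H → Prop) (hpar : IsCliffordLike F H par)
    (g : H) (hg : g ≠ 0) :
    Preserves F H (fun x => g * x) par := by
  intro M N M' N' hM' hN'
  constructor
  · exact fwd F H par hpar g hg M N M' N' hM' hN'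
  · exact fwd F H par hpar g⁻¹ (inv_ne_zero hg) M' N' M N
      (flip_left H hg hM') (flip_left H hg hN')
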